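/- Invariant step for pure asymmetric strategy (Max loses): let W > 1, ν = W − 1, α ∈ (0,1), N = max(S, νS) for S > 0, let s ∈ [0,S], B > 0, x = (s/N)·α·B, and y ≥ x. If B ≥ B₀·(1+α)^(−H/N), then B − x + Wy ≥ B₀·(1+α)^(−(H − νs)/N). -/
import Mathlib

/-- Invariant step for the pure asymmetric strategy when Max loses: with
`ν = W - 1`, `N = max S (νS)`, `x = (s/N)·α·B` and `y ≥ x`, the invariant
`B ≥ B₀·(1+α)^(-H/N)` yields `B - x + Wy ≥ B₀·(1+α)^(-(H - νs)/N)`. -/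
theorem asymmetric_invariant_max_loses (W α S s B B₀ H y : ℝ) (hW : 1 < W)
    (hα : α ∈ Set.Ioo (0:ℝ) 1) (hS : 0 < S) (hs : s ∈ Set.Icc (0:ℝ) S)
    (hB : 0 < B) (hB₀ : 0 < B₀)
    (hy : y ≥ (s / max S ((W - 1) * S)) * α * B)
    (hinv : B ≥ B₀ * (1 + α) ^ (-H / max S ((W - 1) * S))) :
    B - (s / max S ((W - 1) * S)) * α * B + W * y
      ≥ B₀ * (1 + α) ^ (-(H - (W - 1) * s) / max S ((W - 1) * S)) := by
  obtain ⟨hα0, hα1⟩ := hα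
  obtain ⟨hs0, hsS⟩ := hs
  set N : ℝ := max S ((W - 1) * S) with hNdef
  have hN : 0 < N := lt_max_of_lt_left hS
  have hν : 0 < W - 1 := by linarith
  set p : ℝ := (W - 1) * s / N with hpdef
  have hp0 : 0 ≤ p := by positivity
  have hp1 : p ≤ 1 := by
    rw [hpdef, div_le_one hN]
    calc (W - 1) * s ≤ (W - 1) * S := by nlinarith
      _ ≤ N := le_max_right _ _
  have h1α : (0:ℝ) < 1 + α := by linarith
  -- Bernoulli
  have hbern : (1 + α) ^ p ≤ 1 + p * α :=
    rpow_one_add_le_one_add_mul_self (by linarith) hp0 hp1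
  -- lower bound on LHS
  have hx0 : 0 ≤ (s / N) * α * B := by positivity
  have hlhs : B * (1 + p * α) ≤ B - (s / N) * α * B + W * y := by
    have : B - (s / N) * α * B + W * ((s / N) * α * B) ≤ B - (s / N) * α * B + W * y := by
      nlinarith
    refine le_trans (le_of_eq ?_) this
    rw [hpdef]
    field_simp
    ring
  refine le_trans ?_ hlhs
  -- RHS manipulation
  have hsplit : (1 + α) ^ (-(H - (W - 1) * s) / N)
      = (1 + α) ^ (-H / N) * (1 + α) ^ p := by
    rw [← Real.rpow_add h1α, hpdef]
    ring_nf
  rw [hsplit, ← mul_assoc]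
  calc B₀ * (1 + α) ^ (-H / N) * (1 + α) ^ p
      ≤ B * (1 + α) ^ p := by
        apply mul_le_mul_of_nonneg_right hinv (le_of_lt (Real.rpow_pos_of_pos h1α _))
    _ ≤ B * (1 + p * α) := by
        apply mul_le_mul_of_nonneg_left hbern hB.le
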